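/- Let ε̄ ∈ (0,1) and let n be a positive integer. For λ ∈ (0,1), let J_λ ~ Geom(1−ε̄) and T_λ ~ Geom(1−(1−λ)^n) be independent, let T⁽⁰⁾_λ be distributed as T_λ conditioned on {J_λ ≤ T_λ}, and let S ~ Geom(1−ε̄) be independent of T⁽⁰⁾_λ. Set A_λ = T⁽⁰⁾_λ + S. Then for every integer m ≥ 2, lim_{λ → 1⁻} P(A_λ ≥ m) = P(H ≥ m − 1) = ε̄^{m−2}, where H ~ Geom(1−ε̄). -/

import Mathlib

open MeasureTheory ProbabilityTheory Filter
open scoped ENNReal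


lemma geom_tail {Ω : Type*} [MeasurableSpace Ω] (P : Measure Ω) [IsProbabilityMeasure P]
    (r : ℝ) (hr0 : 0 < r) (hr1 : r < 1) (X : Ω → ℕ) (hX : Measurable X)
    (hgeom : ∀ k : ℕ, 1 ≤ k → P {ω | X ω = k} = ENNReal.ofReal (r ^ (k - 1) * (1 - r))) :
    ∀ j : ℕ, 1 ≤ j → P {ω | j ≤ X ω} = ENNReal.ofReal (r ^ (j - 1)) := by
  intro j hj
  have hset : {ω | j ≤ X ω} = ⋃ k : ℕ, {ω | X ω = j + k} := by
    ext ω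
    simp only [Set.mem_setOf_eq, Set.mem_iUnion]
    exact ⟨fun h => ⟨X ω - j, by omega⟩, fun ⟨k, hk⟩ => by omega⟩
  have hmeas : ∀ k : ℕ, MeasurableSet {ω | X ω = j + k} := fun k =>
    hX (measurableSet_singleton (j + k))
  have hdisj : Pairwise (Function.onFun Disjoint fun k => {ω | X ω = j + k}) := by
    intro a b hab
    simp only [Function.onFun, Set.disjoint_left, Set.mem_setOf_eq]
    intro ω h1 h2
    omega
  rw [hset, measure_iUnion hdisj hmeas]
  have hterm : ∀ k : ℕ, P {ω | X ω = j + k}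
      = ENNReal.ofReal (r ^ (j - 1) * (1 - r) * r ^ k) := by
    intro k
    rw [hgeom (j + k) (by omega)]
    congr 1
    have : j + k - 1 = (j - 1) + k := by omega
    rw [this, pow_add]; ring
  simp_rw [hterm]
  rw [← ENNReal.ofReal_tsum_of_nonneg]
  · congr 1
    rw [tsum_mul_left, tsum_geometric_of_lt_one hr0.le hr1]
    rw [mul_assoc, mul_inv_cancel₀ (by linarith : (1:ℝ) - r ≠ 0), mul_one]
  · intro k
    exact mul_nonneg (mul_nonneg (pow_nonneg hr0.le _) (by linarith)) (pow_nonneg hr0.le _)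
  · exact Summable.mul_left _ (summable_geometric_of_lt_one hr0.le hr1)

lemma geom_zero {Ω : Type*} [MeasurableSpace Ω] (P : Measure Ω) [IsProbabilityMeasure P]
    (r : ℝ) (hr0 : 0 < r) (hr1 : r < 1) (X : Ω → ℕ) (hX : Measurable X)
    (hgeom : ∀ k : ℕ, 1 ≤ k → P {ω | X ω = k} = ENNReal.ofReal (r ^ (k - 1) * (1 - r))) :
    P {ω | X ω = 0} = 0 := by
  have h1 : P {ω | 1 ≤ X ω} = 1 := by
    rw [geom_tail P r hr0 hr1 X hX hgeom 1 le_rfl]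
    simp
  have hc : {ω | X ω = 0} = {ω | 1 ≤ X ω}ᶜ := by
    ext ω; simp only [Set.mem_setOf_eq, Set.mem_compl_iff]; omega
  have hm : MeasurableSet {ω | 1 ≤ X ω} := hX measurableSet_Ici
  rw [hc, measure_compl hm (measure_ne_top _ _), h1, measure_univ, tsub_self]

lemma key_bounds {Ω : Type*} [MeasurableSpace Ω] (P : Measure Ω) [IsProbabilityMeasure P]
    (eps r c : ℝ) (he0 : 0 < eps) (he1 : eps < 1) (hr0 : 0 < r) (hr1 : r < 1) (hc : 0 ≤ c)
    (J T T0 S : Ω → ℕ) (hJm : Measurable J) (hTm : Measurable T)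
    (hT0m : Measurable T0) (hSm : Measurable S)
    (hJgeom : ∀ k : ℕ, 1 ≤ k → P {ω | J ω = k} = ENNReal.ofReal (eps ^ (k - 1) * (1 - eps)))
    (hTgeom : ∀ k : ℕ, 1 ≤ k → P {ω | T ω = k} = ENNReal.ofReal (r ^ (k - 1) * (1 - r)))
    (hJT : IndepFun J T P)
    (hT0law : Measure.map T0 P = Measure.map T (P[|{ω | J ω ≤ T ω}]))
    (hT0S : IndepFun T0 S P)
    (m : ℕ) (hm : 2 ≤ m)
    (hS : P {ω | m - 1 ≤ S ω} = ENNReal.ofReal c) :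
    ENNReal.ofReal ((((1 - eps) * (1 - r)) / ((1 - eps) + r)) * c) ≤ P {ω | m ≤ T0 ω + S ω}
    ∧ P {ω | m ≤ T0 ω + S ω}
        ≤ ENNReal.ofReal c + ENNReal.ofReal (r / ((1 - eps) * (1 - r))) := by
  have hcmeas : MeasurableSet {ω | J ω ≤ T ω} := measurableSet_le hJm hTm
  have hJ1 : P {ω | J ω = 1} = ENNReal.ofReal (1 - eps) := by simpa using hJgeom 1 le_rfl
  have hJ0 : P {ω | J ω = 0} = 0 := geom_zero P eps he0 he1 J hJm hJgeom
  have hT1 : P {ω | T ω = 1} = ENNReal.ofReal (1 - r) := by simpa using hTgeom 1 le_rfl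
  have hT2 : P {ω | 2 ≤ T ω} = ENNReal.ofReal r := by
    simpa using geom_tail P r hr0 hr1 T hTm hTgeom 2 (by norm_num)
  have hprod : P ({ω | J ω = 1} ∩ {ω | T ω = 1}) = ENNReal.ofReal ((1 - eps) * (1 - r)) := by
    have h := hJT.measure_inter_preimage_eq_mul {1} {1}
      (measurableSet_singleton 1) (measurableSet_singleton 1)
    have he : J ⁻¹' {1} = {ω | J ω = 1} := rfl
    have ht : T ⁻¹' {1} = {ω | T ω = 1} := rfl
    rw [he, ht] at h
    rw [h, hJ1, hT1, ← ENNReal.ofReal_mul (by linarith)]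
  have hcs_ge : ENNReal.ofReal ((1 - eps) * (1 - r)) ≤ P {ω | J ω ≤ T ω} := by
    rw [← hprod]
    refine measure_mono fun ω hω => ?_
    obtain ⟨h1, h2⟩ := hω
    simp only [Set.mem_setOf_eq] at h1 h2 ⊢
    omega
  have hcs_le : P {ω | J ω ≤ T ω} ≤ ENNReal.ofReal ((1 - eps) + r) := by
    have hsub : {ω | J ω ≤ T ω}
        ⊆ {ω | J ω = 0} ∪ ({ω | J ω = 1} ∪ {ω | 2 ≤ T ω}) := by
      intro ω hω
      simp only [Set.mem_setOf_eq, Set.mem_union] at hω ⊢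
      omega
    calc P {ω | J ω ≤ T ω}
        ≤ P ({ω | J ω = 0} ∪ ({ω | J ω = 1} ∪ {ω | 2 ≤ T ω})) := measure_mono hsub
      _ ≤ P {ω | J ω = 0} + (P {ω | J ω = 1} + P {ω | 2 ≤ T ω}) :=
          le_trans (measure_union_le _ _) (by gcongr; exact measure_union_le _ _)
      _ = ENNReal.ofReal ((1 - eps) + r) := by
          rw [hJ0, hJ1, hT2, zero_add, ← ENNReal.ofReal_add (by linarith) (by linarith)]
  have hlaw : ∀ s : Set ℕ, MeasurableSet s →
      P (T0 ⁻¹' s) = (P {ω | J ω ≤ T ω})⁻¹ * P ({ω | J ω ≤ T ω} ∩ T ⁻¹' s) := by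
    intro s hs
    rw [← Measure.map_apply hT0m hs, hT0law, Measure.map_apply hTm hs, cond_apply hcmeas]
  have hT0one : ENNReal.ofReal (((1 - eps) * (1 - r)) / ((1 - eps) + r))
      ≤ P {ω | T0 ω = 1} := by
    have heq : P {ω | T0 ω = 1} = (P {ω | J ω ≤ T ω})⁻¹ * P ({ω | J ω ≤ T ω} ∩ T ⁻¹' {1}) :=
      hlaw {1} (measurableSet_singleton 1)
    have hnum : ENNReal.ofReal ((1 - eps) * (1 - r)) ≤ P ({ω | J ω ≤ T ω} ∩ T ⁻¹' {1}) := by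
      rw [← hprod]
      refine measure_mono fun ω hω => ?_
      obtain ⟨h1, h2⟩ := hω
      simp only [Set.mem_inter_iff, Set.mem_setOf_eq, Set.mem_preimage, Set.mem_singleton_iff] at h1 h2 ⊢
      omega
    have hinv : (ENNReal.ofReal ((1 - eps) + r))⁻¹ ≤ (P {ω | J ω ≤ T ω})⁻¹ :=
      ENNReal.inv_le_inv.mpr hcs_le
    calc ENNReal.ofReal (((1 - eps) * (1 - r)) / ((1 - eps) + r))
        = (ENNReal.ofReal ((1 - eps) + r))⁻¹ * ENNReal.ofReal ((1 - eps) * (1 - r)) := by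
          rw [ENNReal.ofReal_div_of_pos (by linarith), div_eq_mul_inv, mul_comm]
      _ ≤ (P {ω | J ω ≤ T ω})⁻¹ * P ({ω | J ω ≤ T ω} ∩ T ⁻¹' {1}) := mul_le_mul' hinv hnum
      _ = P {ω | T0 ω = 1} := heq.symm
  have hT0two : P {ω | 2 ≤ T0 ω} ≤ ENNReal.ofReal (r / ((1 - eps) * (1 - r))) := by
    have heq : P {ω | 2 ≤ T0 ω}
        = (P {ω | J ω ≤ T ω})⁻¹ * P ({ω | J ω ≤ T ω} ∩ T ⁻¹' Set.Ici 2) :=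
      hlaw (Set.Ici 2) measurableSet_Ici
    have hnum : P ({ω | J ω ≤ T ω} ∩ T ⁻¹' Set.Ici 2) ≤ ENNReal.ofReal r := by
      rw [← hT2]
      exact measure_mono fun ω hω => hω.2
    have hinv : (P {ω | J ω ≤ T ω})⁻¹ ≤ (ENNReal.ofReal ((1 - eps) * (1 - r)))⁻¹ :=
      ENNReal.inv_le_inv.mpr hcs_ge
    calc P {ω | 2 ≤ T0 ω}
        = (P {ω | J ω ≤ T ω})⁻¹ * P ({ω | J ω ≤ T ω} ∩ T ⁻¹' Set.Ici 2) := heq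
      _ ≤ (ENNReal.ofReal ((1 - eps) * (1 - r)))⁻¹ * ENNReal.ofReal r := mul_le_mul' hinv hnum
      _ = ENNReal.ofReal (r / ((1 - eps) * (1 - r))) := by
          rw [ENNReal.ofReal_div_of_pos (by nlinarith), div_eq_mul_inv, mul_comm]
  constructor
  · calc ENNReal.ofReal ((((1 - eps) * (1 - r)) / ((1 - eps) + r)) * c)
        = ENNReal.ofReal (((1 - eps) * (1 - r)) / ((1 - eps) + r)) * ENNReal.ofReal c := by
          rw [ENNReal.ofReal_mul (div_nonneg (mul_nonneg (by linarith) (by linarith)) (by linarith))]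
      _ ≤ P {ω | T0 ω = 1} * P {ω | m - 1 ≤ S ω} := by
          rw [hS]; exact mul_le_mul_left hT0one _
      _ = P ({ω | T0 ω = 1} ∩ {ω | m - 1 ≤ S ω}) := by
          have h := hT0S.measure_inter_preimage_eq_mul {1} (Set.Ici (m - 1))
            (measurableSet_singleton 1) measurableSet_Ici
          have h1 : T0 ⁻¹' {1} = {ω | T0 ω = 1} := rfl
          have h2 : S ⁻¹' Set.Ici (m - 1) = {ω | m - 1 ≤ S ω} := rfl
          rw [h1, h2] at h
          exact h.symm
      _ ≤ P {ω | m ≤ T0 ω + S ω} := by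
          refine measure_mono fun ω hω => ?_
          obtain ⟨h1, h2⟩ := hω
          simp only [Set.mem_setOf_eq] at h1 h2 ⊢
          omega
  · calc P {ω | m ≤ T0 ω + S ω}
        ≤ P ({ω | m - 1 ≤ S ω} ∪ {ω | 2 ≤ T0 ω}) := by
          refine measure_mono fun ω hω => ?_
          simp only [Set.mem_setOf_eq, Set.mem_union] at hω ⊢
          omega
      _ ≤ P {ω | m - 1 ≤ S ω} + P {ω | 2 ≤ T0 ω} := measure_union_le _ _
      _ ≤ ENNReal.ofReal c + ENNReal.ofReal (r / ((1 - eps) * (1 - r))) := by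
          rw [hS]; exact add_le_add_right hT0two _

/-- **Limiting peak-age violation probability (equation (17)).**
For each arrival rate `λ ∈ (0,1)`: `J_λ ~ Geom(1−ε̄)` and `T_λ ~ Geom(1−(1−λ)^n)` are
independent, `T⁽⁰⁾_λ` (here `T0 lam`) is distributed as `T_λ` conditioned on
`{J_λ ≤ T_λ}`, and `S ~ Geom(1−ε̄)` is independent of `T⁽⁰⁾_λ`.  With
`A_λ = T⁽⁰⁾_λ + S`, for every integer `m ≥ 2`,
`lim_{λ → 1⁻} P(A_λ ≥ m) = P(H ≥ m−1) = ε̄^{m−2}`, where `H ~ Geom(1−ε̄)`. -/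
theorem limiting_peak_age_violation
    {Ω : Type*} [MeasurableSpace Ω] (P : Measure Ω) [IsProbabilityMeasure P]
    (eps : ℝ) (heps : eps ∈ Set.Ioo (0 : ℝ) 1)
    (n : ℕ) (hn : 0 < n)
    (J T T0 : ℝ → Ω → ℕ) (S : Ω → ℕ) (H : Ω → ℕ)
    (hJmeas : ∀ lam ∈ Set.Ioo (0 : ℝ) 1, Measurable (J lam))
    (hTmeas : ∀ lam ∈ Set.Ioo (0 : ℝ) 1, Measurable (T lam))
    (hT0meas : ∀ lam ∈ Set.Ioo (0 : ℝ) 1, Measurable (T0 lam))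
    (hSmeas : Measurable S) (hHmeas : Measurable H)
    (hJgeom : ∀ lam ∈ Set.Ioo (0 : ℝ) 1, ∀ k : ℕ, 1 ≤ k →
      P {ω | J lam ω = k} = ENNReal.ofReal (eps ^ (k - 1) * (1 - eps)))
    (hTgeom : ∀ lam ∈ Set.Ioo (0 : ℝ) 1, ∀ k : ℕ, 1 ≤ k →
      P {ω | T lam ω = k}
        = ENNReal.ofReal (((1 - lam) ^ n) ^ (k - 1) * (1 - (1 - lam) ^ n)))
    (hJT : ∀ lam ∈ Set.Ioo (0 : ℝ) 1, IndepFun (J lam) (T lam) P)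
    (hT0law : ∀ lam ∈ Set.Ioo (0 : ℝ) 1,
      Measure.map (T0 lam) P
        = Measure.map (T lam) (P[|{ω | J lam ω ≤ T lam ω}]))
    (hSgeom : ∀ k : ℕ, 1 ≤ k →
      P {ω | S ω = k} = ENNReal.ofReal (eps ^ (k - 1) * (1 - eps)))
    (hT0S : ∀ lam ∈ Set.Ioo (0 : ℝ) 1, IndepFun (T0 lam) S P)
    (hHgeom : ∀ k : ℕ, 1 ≤ k →
      P {ω | H ω = k} = ENNReal.ofReal (eps ^ (k - 1) * (1 - eps)))
    (A : ℝ → Ω → ℕ) (hA : ∀ lam ω, A lam ω = T0 lam ω + S ω) :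
    ∀ m : ℕ, 2 ≤ m →
      P {ω | m - 1 ≤ H ω} = ENNReal.ofReal (eps ^ (m - 2))
      ∧ Tendsto (fun lam => P {ω | m ≤ A lam ω})
          (nhdsWithin 1 (Set.Ioo (0 : ℝ) 1))
          (nhds (P {ω | m - 1 ≤ H ω})) := by
  obtain ⟨he0, he1⟩ := heps
  intro m hm
  have hHtail : P {ω | m - 1 ≤ H ω} = ENNReal.ofReal (eps ^ (m - 2)) := by
    have := geom_tail P eps he0 he1 H hHmeas hHgeom (m - 1) (by omega)
    rwa [show m - 1 - 1 = m - 2 from by omega] at this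
  refine ⟨hHtail, ?_⟩
  rw [hHtail]
  have hStail : P {ω | m - 1 ≤ S ω} = ENNReal.ofReal (eps ^ (m - 2)) := by
    have := geom_tail P eps he0 he1 S hSmeas hSgeom (m - 1) (by omega)
    rwa [show m - 1 - 1 = m - 2 from by omega] at this
  set c : ℝ := eps ^ (m - 2) with hcdef
  have hc0 : 0 < c := pow_pos he0 _
  have hem : (0:ℝ) < 1 - eps := by linarith
  set L := nhdsWithin (1 : ℝ) (Set.Ioo (0 : ℝ) 1) with hL
  have hq0 : Tendsto (fun lam : ℝ => (1 - lam) ^ n) L (nhds 0) := by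
    have hcont : Tendsto (fun lam : ℝ => (1 - lam) ^ n) (nhds 1)
        (nhds ((1 - (1:ℝ)) ^ n)) :=
      ((continuous_const.sub continuous_id).pow n).tendsto 1
    simpa [zero_pow hn.ne'] using hcont.mono_left nhdsWithin_le_nhds
  have hLo : Tendsto (fun lam : ℝ => ENNReal.ofReal
      ((((1 - eps) * (1 - (1 - lam) ^ n)) / ((1 - eps) + (1 - lam) ^ n)) * c)) L
      (nhds (ENNReal.ofReal c)) := by
    have hre : Tendsto (fun lam : ℝ =>
        (((1 - eps) * (1 - (1 - lam) ^ n)) / ((1 - eps) + (1 - lam) ^ n)) * c) L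
        (nhds ((((1 - eps) * (1 - 0)) / ((1 - eps) + 0)) * c)) := by
      refine Tendsto.mul (Tendsto.div ?_ ?_ (by rw [add_zero]; exact hem.ne')) tendsto_const_nhds
      · exact tendsto_const_nhds.mul (tendsto_const_nhds.sub hq0)
      · exact tendsto_const_nhds.add hq0
    have heq : (((1 - eps) * (1 - 0)) / ((1 - eps) + 0)) * c = c := by
      rw [sub_zero, add_zero, mul_one, div_self hem.ne', one_mul]
    rw [heq] at hre
    exact (ENNReal.continuous_ofReal.tendsto c).comp hre
  have hUp : Tendsto (fun lam : ℝ => ENNReal.ofReal c +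
      ENNReal.ofReal ((1 - lam) ^ n / ((1 - eps) * (1 - (1 - lam) ^ n)))) L
      (nhds (ENNReal.ofReal c)) := by
    have hre : Tendsto (fun lam : ℝ =>
        (1 - lam) ^ n / ((1 - eps) * (1 - (1 - lam) ^ n))) L
        (nhds (0 / ((1 - eps) * (1 - 0)))) := by
      refine Tendsto.div hq0 (tendsto_const_nhds.mul (tendsto_const_nhds.sub hq0)) ?_
      rw [sub_zero, mul_one]; exact hem.ne'
    rw [zero_div] at hre
    have h2 := (ENNReal.continuous_ofReal.tendsto 0).comp hre
    simpa using tendsto_const_nhds.add h2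
  refine tendsto_of_tendsto_of_tendsto_of_le_of_le' hLo hUp ?_ ?_ <;>
    refine Filter.eventually_of_mem self_mem_nhdsWithin (fun lam hlam => ?_) <;>
  · obtain ⟨hl0, hl1⟩ := hlam
    have hq0' : 0 < (1 - lam) ^ n := pow_pos (by linarith) n
    have hq1 : (1 - lam) ^ n < 1 := pow_lt_one₀ (by linarith) (by linarith) hn.ne'
    have hAset : {ω | m ≤ A lam ω} = {ω | m ≤ T0 lam ω + S ω} := by
      ext ω; simp [hA]
    have hkey := key_bounds P eps ((1 - lam) ^ n) c he0 he1 hq0' hq1 hc0.le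
      (J lam) (T lam) (T0 lam) S (hJmeas lam ⟨hl0, hl1⟩) (hTmeas lam ⟨hl0, hl1⟩)
      (hT0meas lam ⟨hl0, hl1⟩) hSmeas (hJgeom lam ⟨hl0, hl1⟩) (hTgeom lam ⟨hl0, hl1⟩)
      (hJT lam ⟨hl0, hl1⟩) (hT0law lam ⟨hl0, hl1⟩) (hT0S lam ⟨hl0, hl1⟩) m hm hStail
    rw [hAset]
    first
      | exact hkey.1
      | exact hkey.2
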